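/- Every finite simple graph G on n vertices admits a max-plus n-tropical dot product representation; in particular, the max-plus tropical dot product dimension ρ_T̂(G) is well defined and satisfies ρ_T̂(G) ≤ n. -/
import Mathlib


/-- A max-plus `k`-tropical dot product representation of `G` with threshold `t`:
distinct vertices `x, y` are adjacent iff `max_{1 ≤ i ≤ k} (f(x)_i + f(y)_i) ≥ t`
(equivalently, some coordinate sum is at least `t`). -/
def MaxPlusRep {V : Type*} (G : SimpleGraph V) (k : ℕ) (f : V → Fin k → ℝ) (t : ℝ) : Prop :=
  0 < t ∧ ∀ x y : V, x ≠ y → (G.Adj x y ↔ ∃ i : Fin k, t ≤ f x i + f y i)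

/-- The max-plus tropical dot product dimension `ρ_T̂(G)`. -/
noncomputable def rhoTHat {V : Type*} (G : SimpleGraph V) : ℕ :=
  sInf {k : ℕ | 0 < k ∧ ∃ (f : V → Fin k → ℝ) (t : ℝ), MaxPlusRep G k f t}

/-- Every finite simple graph on `n` vertices admits a max-plus `n`-tropical dot product
representation; in particular `ρ_T̂(G) ≤ n`. -/
theorem stmt_3 {V : Type*} [Fintype V] [Nonempty V] (G : SimpleGraph V) :
    (∃ (f : V → Fin (Fintype.card V) → ℝ) (t : ℝ), MaxPlusRep G (Fintype.card V) f t) ∧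
      rhoTHat G ≤ Fintype.card V := by
  classical
  obtain ⟨e⟩ := Fintype.truncEquivFin V
  set n := Fintype.card V
  set f : V → Fin n → ℝ :=
    fun x i => if x = e.symm i then 1 else if G.Adj x (e.symm i) then 1/2 else -10 with hf
  have hrep : MaxPlusRep G n f (3/2) := by
    refine ⟨by norm_num, fun x y hxy => ?_⟩
    constructor
    · intro hadj
      refine ⟨e y, ?_⟩
      simp only [hf, Equiv.symm_apply_apply]
      simp only [if_pos trivial, if_neg hxy, if_pos hadj]
      norm_num
    · rintro ⟨i, hi⟩
      set v := e.symm i with hv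
      by_cases hx1 : x = v
      · by_cases hy1 : y = v
        · exact absurd (hx1.trans hy1.symm) hxy
        · simp only [hf, ← hv, if_pos hx1, if_neg hy1] at hi
          by_cases hy2 : G.Adj y v
          · exact (hx1 ▸ hy2).symm
          · rw [if_neg hy2] at hi; norm_num at hi
      · by_cases hx2 : G.Adj x v
        · by_cases hy1 : y = v
          · exact hy1 ▸ hx2
          · simp only [hf, ← hv, if_neg hx1, if_pos hx2, if_neg hy1] at hi
            by_cases hy2 : G.Adj y v
            · rw [if_pos hy2] at hi; norm_num at hi
            · rw [if_neg hy2] at hi; norm_num at hi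
        · simp only [hf, ← hv, if_neg hx1, if_neg hx2] at hi
          have : f y i ≤ 1 := by
            simp only [hf]
            split_ifs <;> norm_num
          simp only [hf, ← hv] at this
          linarith
  have hmem : n ∈ {k : ℕ | 0 < k ∧ ∃ (f : V → Fin k → ℝ) (t : ℝ), MaxPlusRep G k f t} :=
    ⟨Fintype.card_pos, f, 3/2, hrep⟩
  exact ⟨⟨f, 3/2, hrep⟩, Nat.sInf_le hmem⟩
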